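/- For the exponential-type example, lower joint cost does not imply lower joint virtual cost: with efforts γ_0 = 0, γ_1 = 1, γ_2 = 2, γ_3 = 3, γ_4 = 7, types c_1 = 1, c_2 = 2, and virtual cost φ(c) = c + e^c − 1 (exponential distribution with rate 1): the allocation (x(1), x(2)) = (2, 3) has joint cost γ_3·2 + γ_2·1 = 8 which is strictly less than the joint cost γ_1·2 + γ_4·1 = 9 of (x'(1), x'(2)) = (4, 1); yet its joint virtual cost γ_3·φ(2) + γ_2·φ(1) = 3(1 + e²) + 2e is strictly greater than γ_1·φ(2) + γ_4·φ(1) = (1 + e²) + 7e. -/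

import Mathlib

/-- For the exponential distribution, lower joint cost does not imply lower
joint virtual cost: a concrete counterexample. -/
theorem exponential_counterexample
    (γ : Fin 5 → ℝ) (hγ : γ = ![0, 1, 2, 3, 7])
    (φ : ℝ → ℝ) (hφ : ∀ c, φ c = c + Real.exp c - 1) :
    γ 3 * 2 + γ 2 * 1 = 8 ∧
    γ 1 * 2 + γ 4 * 1 = 9 ∧
    γ 3 * 2 + γ 2 * 1 < γ 1 * 2 + γ 4 * 1 ∧
    γ 3 * φ 2 + γ 2 * φ 1 = 3 * (1 + Real.exp 2) + 2 * Real.exp 1 ∧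
    γ 1 * φ 2 + γ 4 * φ 1 = (1 + Real.exp 2) + 7 * Real.exp 1 ∧
    γ 1 * φ 2 + γ 4 * φ 1 < γ 3 * φ 2 + γ 2 * φ 1 := by
  have he2 : (2:ℝ) < Real.exp 1 := by
    have := Real.exp_one_gt_d9; linarith
  have hsq : Real.exp 2 = Real.exp 1 * Real.exp 1 := by
    rw [← Real.exp_add]; norm_num
  have key : (1:ℝ) + Real.exp 2 + 7 * Real.exp 1 <
      3 * (1 + Real.exp 2) + 2 * Real.exp 1 := by
    rw [hsq]; nlinarith [he2]
  subst hγ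
  simp only [hφ]
  norm_num [Matrix.cons_val_one, Matrix.head_cons,
    show (![0, 1, 2, 3, 7] : Fin 5 → ℝ) 2 = 2 from rfl,
    show (![0, 1, 2, 3, 7] : Fin 5 → ℝ) 3 = 3 from rfl,
    show (![0, 1, 2, 3, 7] : Fin 5 → ℝ) 4 = 7 from rfl]
  constructor
  · ring
  linarith
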